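/- Let S be finite, ρ a probability distribution on S, and D = (X_1, …, X_m) i.i.d. samples from ρ. Suppose a learner π agrees with a fixed deterministic expert policy on every state appearing in D, and that value differences satisfy 0 ≤ V₁^{π_E}(s) − V₁^π(s) ≤ H for all s, with equality to 0 whenever s ∈ {X_1, …, X_m}. Then E[V^{π_E} − V^π] ≤ H·Σ_{s ∈ S} ρ(s)(1 − ρ(s))^m ≤ H·|S|/(e·m). -/

import Mathlib

open MeasureTheory

lemma aux_pt (x : ℝ) (hx0 : 0 ≤ x) (hx1 : x ≤ 1) (m : ℕ) (hm : 1 ≤ m) :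
    x * (1 - x) ^ m ≤ 1 / (Real.exp 1 * m) := by
  have hmpos : (0:ℝ) < m := by exact_mod_cast hm
  have h1 : (1 - x) ≤ Real.exp (-x) := by
    have := Real.add_one_le_exp (-x); linarith
  have h2 : (1 - x) ^ m ≤ Real.exp (-x) ^ m := pow_le_pow_left₀ (by linarith) h1 m
  rw [← Real.exp_nat_mul] at h2
  set t : ℝ := m * x with ht
  have htt : (m:ℝ) * (-x) = -t := by rw [ht]; ring
  rw [htt] at h2
  have key : t * Real.exp (-t) ≤ Real.exp (-1 : ℝ) := by
    have h := Real.add_one_le_exp (t - 1)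
    have ht' : t ≤ Real.exp (t - 1) := by linarith
    have := mul_le_mul_of_nonneg_right ht' (Real.exp_pos (-t)).le
    rwa [← Real.exp_add, show t - 1 + -t = -1 by ring] at this
  calc x * (1 - x) ^ m ≤ x * Real.exp (-t) :=
        mul_le_mul_of_nonneg_left h2 hx0
    _ = (t * Real.exp (-t)) / m := by field_simp [ht]; ring
    _ ≤ Real.exp (-1) / m := by
        gcongr
    _ = 1 / (Real.exp 1 * m) := by
        rw [Real.exp_neg]; field_simp

theorem stmt_16 (S : Type*) [Fintype S] [MeasurableSpace S] [MeasurableSingletonClass S]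
    (ρ : PMF S) (m : ℕ) (hm : 1 ≤ m) (H : ℝ) (hH : 0 ≤ H)
    (g : (Fin m → S) → S → ℝ)
    (hg0 : ∀ ω s, 0 ≤ g ω s) (hg1 : ∀ ω s, g ω s ≤ H)
    (hobs : ∀ ω s, (∃ i, ω i = s) → g ω s = 0) :
    (∫ ω : Fin m → S, (∑ s : S, (ρ s).toReal * g ω s)
        ∂(Measure.pi fun _ => ρ.toMeasure))
      ≤ H * ∑ s : S, (ρ s).toReal * (1 - (ρ s).toReal) ^ m
    ∧ H * ∑ s : S, (ρ s).toReal * (1 - (ρ s).toReal) ^ m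
      ≤ H * (Fintype.card S : ℝ) / (Real.exp 1 * m) := by
  set μ : Measure (Fin m → S) := Measure.pi fun _ => ρ.toMeasure with hμ
  have hx01 : ∀ s : S, (ρ s).toReal ≤ 1 := by
    intro s
    have := ρ.coe_le_one s
    exact ENNReal.toReal_le_of_le_ofReal zero_le_one (by simpa using this)
  constructor
  · -- part 1
    have hint : ∀ s : S, Integrable (fun ω => (ρ s).toReal * g ω s) μ :=
      fun s => .of_finite
    rw [integral_finset_sum _ (fun s _ => hint s)]
    have hbound : ∀ s : S,
        (∫ ω, (ρ s).toReal * g ω s ∂μ)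
          ≤ (ρ s).toReal * (H * (1 - (ρ s).toReal) ^ m) := by
      intro s
      rw [integral_const_mul]
      apply mul_le_mul_of_nonneg_left _ ENNReal.toReal_nonneg
      -- ∫ g ω s ≤ H * (1-ρs)^m
      set A : Set (Fin m → S) := {ω | ∀ i, ω i ≠ s} with hA
      have hAm : MeasurableSet A := (Set.toFinite A).measurableSet
      have hle : ∀ ω, g ω s ≤ A.indicator (fun _ => H) ω := by
        intro ω
        by_cases hω : ω ∈ A
        · rw [Set.indicator_of_mem hω]; exact hg1 ω s
        · rw [Set.indicator_of_notMem hω]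
          have : ∃ i, ω i = s := by
            simp only [hA, Set.mem_setOf_eq, not_forall, not_not] at hω
            exact hω
          rw [hobs ω s this]
      have h1 : (∫ ω, g ω s ∂μ) ≤ ∫ ω, A.indicator (fun _ => H) ω ∂μ :=
        integral_mono .of_finite .of_finite hle
      have h2 : (∫ ω, A.indicator (fun _ => H) ω ∂μ) = (μ A).toReal * H := by
        rw [integral_indicator_const _ hAm]; simp [smul_eq_mul, Measure.real]
      have h3 : (μ A).toReal = (1 - (ρ s).toReal) ^ m := by
        have hApi : A = Set.pi Set.univ (fun _ : Fin m => ({s}ᶜ : Set S)) := by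
          ext ω; simp [hA]
        rw [hApi, hμ, Measure.pi_pi]
        have hsing : ρ.toMeasure {s} = ρ s := by
          rw [PMF.toMeasure_apply_singleton _ _ (measurableSet_singleton s)]
        have hcompl : ρ.toMeasure ({s}ᶜ) = 1 - ρ s := by
          rw [prob_compl_eq_one_sub (measurableSet_singleton s), hsing]
        rw [Finset.prod_const, hcompl]
        rw [ENNReal.toReal_pow, ENNReal.toReal_sub_of_le (ρ.coe_le_one s) ENNReal.one_ne_top]
        simp
      calc (∫ ω, g ω s ∂μ) ≤ (μ A).toReal * H := h1.trans_eq h2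
        _ = H * (1 - (ρ s).toReal) ^ m := by rw [h3]; ring
    calc ∑ s : S, ∫ ω, (ρ s).toReal * g ω s ∂μ
        ≤ ∑ s : S, (ρ s).toReal * (H * (1 - (ρ s).toReal) ^ m) :=
          Finset.sum_le_sum fun s _ => hbound s
      _ = H * ∑ s : S, (ρ s).toReal * (1 - (ρ s).toReal) ^ m := by
          rw [Finset.mul_sum]; apply Finset.sum_congr rfl; intros; ring
  · -- part 2
    have hmpos : (0:ℝ) < m := by exact_mod_cast hm
    have h : ∑ s : S, (ρ s).toReal * (1 - (ρ s).toReal) ^ m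
        ≤ (Fintype.card S : ℝ) / (Real.exp 1 * m) := by
      calc ∑ s : S, (ρ s).toReal * (1 - (ρ s).toReal) ^ m
          ≤ ∑ _s : S, 1 / (Real.exp 1 * m) :=
            Finset.sum_le_sum fun s _ =>
              aux_pt _ ENNReal.toReal_nonneg (hx01 s) m hm
        _ = (Fintype.card S : ℝ) / (Real.exp 1 * m) := by
            rw [Finset.sum_const, Finset.card_univ, nsmul_eq_mul]; ring
    rw [mul_div_assoc]
    exact mul_le_mul_of_nonneg_left h hH
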